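/- For a, b ∈ F_q not both zero, the Salié sum S(a,b) = Σ_{s ∈ F_q^*} χ(as + b/s) η(s) satisfies |S(a,b)| ≤ 2√q. -/

import Mathlib

open Finset

/-- The canonical additive character of a finite field `F` of characteristic `p`. -/
noncomputable def canonicalChar (p : ℕ) [Fact p.Prime] (F : Type*) [Field F] [Fintype F]
    [Algebra (ZMod p) F] (a : F) : ℂ :=
  Complex.exp (2 * Real.pi * Complex.I * ((Algebra.trace (ZMod p) F a).val : ℂ) / p)

open scoped Classical in
/-- The quadratic character `η` of `F_q^*`, extended by `0` to all of `F_q`: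
`η(a) = 1` if `a` is a nonzero square, `-1` if `a` is a nonsquare. -/
noncomputable def quadChar (F : Type*) [Field F] [Fintype F] (a : F) : ℂ :=
  if a = 0 then 0 else if IsSquare a then 1 else -1

section SalieAux
open scoped Classical
set_option linter.unusedSectionVars false

variable (p : ℕ) [Fact p.Prime] (F : Type*) [Field F] [Fintype F] [Algebra (ZMod p) F]

/-- The canonical additive character, packaged as an `AddChar`. -/
noncomputable def psiF : AddChar F ℂ :=
  haveI : NeZero p := ⟨(Fact.out : p.Prime).ne_zero⟩
  (ZMod.stdAddChar).compAddMonoidHom (Algebra.trace (ZMod p) F).toAddMonoidHom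

/-- The quadratic character with values in `ℂ`, packaged as a `MulChar`. -/
noncomputable def etaF : MulChar F ℂ := (quadraticChar F).ringHomComp (Int.castRingHom ℂ)

variable {F}

lemma psiF_apply [NeZero p] (x : F) :
    psiF p F x = ZMod.stdAddChar (Algebra.trace (ZMod p) F x) := rfl

lemma canonicalChar_eq [NeZero p] (x : F) : canonicalChar p F x = psiF p F x := by
  have h := ZMod.stdAddChar_coe (N := p) ((Algebra.trace (ZMod p) F x).val : ℤ)
  have h2 : ((((Algebra.trace (ZMod p) F x).val : ℤ)) : ZMod p)
      = Algebra.trace (ZMod p) F x := by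
    push_cast
    exact ZMod.natCast_zmod_val _
  rw [h2] at h
  rw [psiF_apply, h, canonicalChar]
  norm_cast

lemma etaF_apply (a : F) : etaF F a = ((quadraticChar F a : ℤ) : ℂ) := rfl

lemma quadChar_eq (a : F) : quadChar F a = etaF F a := by
  by_cases h0 : a = 0
  · subst h0
    simp [quadChar, etaF_apply, quadraticChar_zero]
  · by_cases hs : IsSquare a
    · rw [quadChar, if_neg h0, if_pos hs, etaF_apply,
        (quadraticChar_one_iff_isSquare h0).mpr hs]
      norm_num
    · rw [quadChar, if_neg h0, if_neg hs, etaF_apply,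
        quadraticChar_neg_one_iff_not_isSquare.mpr hs]
      norm_num

lemma abs_psiF [NeZero p] (x : F) : ‖psiF p F x‖ = 1 := by
  rw [psiF_apply, ZMod.stdAddChar_apply]
  exact Circle.norm_coe _

lemma psiF_ne_one : psiF p F ≠ 1 := by
  haveI : NeZero p := ⟨(Fact.out : p.Prime).ne_zero⟩
  haveI : CharP F p := charP_of_injective_algebraMap (algebraMap (ZMod p) F).injective p
  have hrc : ringChar F = p := ringChar.eq F p
  subst hrc
  obtain ⟨x, hx⟩ := FiniteField.trace_to_zmod_nondegenerate F (one_ne_zero (α := F))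
  rw [one_mul] at hx
  refine AddChar.ne_one_iff.2 ⟨x, fun hf => hx ?_⟩
  rw [psiF_apply] at hf
  have := ZMod.injective_stdAddChar (N := ringChar F)
    (a₁ := Algebra.trace (ZMod (ringChar F)) F x) (a₂ := 0)
  rw [← (ZMod.stdAddChar (N := ringChar F)).map_zero_eq_one] at hf
  exact this hf

lemma psiF_primitive : (psiF p F).IsPrimitive :=
  AddChar.IsPrimitive.of_ne_one (psiF_ne_one p)

end SalieAux

open scoped Classical in
theorem salie_sum_bound
    (p : ℕ) [Fact p.Prime] (F : Type*) [Field F] [Fintype F] [Algebra (ZMod p) F]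
    (hq : Odd (Fintype.card F)) (a b : F) (hab : ¬(a = 0 ∧ b = 0)) :
    ‖(∑ s ∈ Finset.univ.filter (fun s : F => s ≠ 0),
        canonicalChar p F (a * s + b / s) * quadChar F s)‖
      ≤ 2 * Real.sqrt (Fintype.card F) := by
  haveI : NeZero p := ⟨(Fact.out : p.Prime).ne_zero⟩
  set ψ := psiF p F with hψdef
  set η := etaF F with hηdef
  set g := gaussSum η ψ with hgdef
  set S₀ : Finset F := Finset.univ.filter (fun s : F => s ≠ 0) with hS₀def
  -- basic facts
  have hF2 : ringChar F ≠ 2 := by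
    intro h
    have h2 := FiniteField.even_card_iff_char_two (F := F) |>.mp h
    rw [Nat.odd_iff] at hq
    omega
  have h2 : (2 : F) ≠ 0 := Ring.two_ne_zero hF2
  have hη0 : η (0 : F) = 0 := by
    rw [hηdef, etaF_apply, quadraticChar_zero]; norm_num
  have hηsq : ∀ x : F, x ≠ 0 → η x * η x = 1 := by
    intro x hx
    rcases quadraticChar_dichotomy (F := F) (a := x) hx with h | h <;>
      rw [hηdef, etaF_apply, h] <;> norm_num
  have hηabs : ∀ x : F, x ≠ 0 → ‖η x‖ = 1 := by
    intro x hx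
    rcases quadraticChar_dichotomy (F := F) (a := x) hx with h | h <;>
      rw [hηdef, etaF_apply, h] <;> norm_num
  have hψabs : ∀ x : F, ‖ψ x‖ = 1 := fun x => abs_psiF p x
  have hη1 : η ≠ 1 := by
    obtain ⟨u, hu⟩ := quadraticChar_exists_neg_one' hF2
    intro hf
    have h1 : η (u : F) = 1 := by rw [hf]; exact MulChar.one_apply_coe u
    rw [hηdef, etaF_apply, hu] at h1
    norm_num at h1
  have hηquad : η.IsQuadratic := (quadraticChar_isQuadratic F).comp _
  have hprim : ψ.IsPrimitive := psiF_primitive p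
  have hgabs : ‖g‖ = Real.sqrt (Fintype.card F) := by
    have hg2 : g ^ 2 = η (-1) * (Fintype.card F : ℂ) :=
      gaussSum_sq hη1 hηquad hprim
    have habs2 : ‖g‖ ^ 2 = (Fintype.card F : ℝ) := by
      rw [← norm_pow, hg2, norm_mul, hηabs (-1) (by norm_num), one_mul,
        Complex.norm_natCast]
    rw [← habs2, Real.sqrt_sq (norm_nonneg g)]
  have hsqrt0 : 0 ≤ Real.sqrt (Fintype.card F) := Real.sqrt_nonneg _
  have hdiv : ∀ x y : F, y ≠ 0 → η (x / y) = η x * η y := by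
    intro x y hy
    have hxy : x / y = x * y * (y⁻¹ * y⁻¹) := by field_simp
    rw [hxy]
    simp only [map_mul]
    rw [hηsq _ (inv_ne_zero hy), mul_one]
  have hfilter : ∀ f : F → ℂ, f 0 = 0 → ∑ s ∈ S₀, f s = ∑ s : F, f s := by
    intro f hf
    rw [hS₀def, show (Finset.univ.filter (fun s : F => s ≠ 0))
        = Finset.univ.erase 0 from Finset.filter_ne' _ _]
    exact Finset.sum_erase _ hf
  have hshift : ∀ c : F, c ≠ 0 → ∑ s : F, η s * ψ (c * s) = η c * g := by
    intro c hc
    have h1 := gaussSum_mulShift η ψ (Units.mk0 c hc)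
    have h2' : gaussSum η (ψ.mulShift (Units.mk0 c hc)) = ∑ s : F, η s * ψ (c * s) := by
      simp [gaussSum, AddChar.mulShift_apply]
    rw [h2'] at h1
    have := congrArg (fun z => η c * z) h1
    simpa [← mul_assoc, hηsq c hc] using this
  -- rewrite the summand
  have hsum : (∑ s ∈ S₀, canonicalChar p F (a * s + b / s) * quadChar F s)
      = ∑ s ∈ S₀, ψ (a * s + b / s) * η s :=
    Finset.sum_congr rfl fun s _ => by rw [canonicalChar_eq, quadChar_eq]
  rw [hsum]
  have hmemS₀ : ∀ s : F, s ∈ S₀ ↔ s ≠ 0 := by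
    intro s; rw [hS₀def]; simp
  by_cases ha : a = 0
  · -- case a = 0, b ≠ 0
    have hb : b ≠ 0 := fun hb => hab ⟨ha, hb⟩
    have e1 : ∑ s ∈ S₀, ψ (a * s + b / s) * η s = η b * g := by
      rw [Finset.sum_nbij' (i := fun s => b / s) (j := fun s => b / s)
        (t := S₀) (g := fun t => η b * (η t * ψ t))
        (fun s hs => by
          rw [hS₀def] at *
          simp only [Finset.mem_filter, Finset.mem_univ, true_and] at *
          exact div_ne_zero hb hs)
        (fun s hs => by
          rw [hS₀def] at *
          simp only [Finset.mem_filter, Finset.mem_univ, true_and] at *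
          exact div_ne_zero hb hs)
        (fun s hs => by
          rw [hS₀def] at hs
          simp only [Finset.mem_filter, Finset.mem_univ, true_and] at hs
          field_simp)
        (fun s hs => by
          rw [hS₀def] at hs
          simp only [Finset.mem_filter, Finset.mem_univ, true_and] at hs
          field_simp)
        (fun s hs => by
          rw [hS₀def] at hs
          simp only [Finset.mem_filter, Finset.mem_univ, true_and] at hs
          show ψ (a * s + b / s) * η s = η b * (η (b / s) * ψ (b / s))
          rw [ha, zero_mul, zero_add, hdiv b s hs]
          have hb2 := hηsq b hb
          linear_combination (-(η s * ψ (b / s))) * hb2)]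
      rw [← Finset.mul_sum]
      congr 1
      rw [hfilter (fun t => η t * ψ t) (by simp [hη0])]
      rfl
    rw [e1, norm_mul, hηabs b hb, one_mul, hgabs]
    linarith
  by_cases hb : b = 0
  · -- case b = 0, a ≠ 0
    have e1 : ∑ s ∈ S₀, ψ (a * s + b / s) * η s = η a * g := by
      rw [show (∑ s ∈ S₀, ψ (a * s + b / s) * η s)
          = ∑ s ∈ S₀, η s * ψ (a * s) from Finset.sum_congr rfl fun s _ => by
        rw [hb, zero_div, add_zero]; ring]
      rw [hfilter (fun s => η s * ψ (a * s)) (by simp [hη0])]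
      exact hshift a ha
    rw [e1, norm_mul, hηabs a ha, one_mul, hgabs]
    linarith
  -- both a and b nonzero
  by_cases hsq : IsSquare (a * b)
  · -- the Salié evaluation
    obtain ⟨r, hr⟩ := hsq
    set v := r with hvdef
    have hv : v * v = a * b := hr.symm
    have hv0 : v ≠ 0 := by
      intro h
      rw [h, mul_zero] at hv
      exact ha (by
        rcases mul_eq_zero.mp hv.symm with h' | h'
        · exact h'
        · exact absurd h' hb)
    set w : F → F := fun s => (a * s - v) ^ 2 / (a * s) with hwdef
    set A : Finset F := S₀.erase (v / a) with hAdef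
    have hmemA : ∀ s : F, s ∈ A ↔ s ≠ v / a ∧ s ≠ 0 := by
      intro s; rw [hAdef, Finset.mem_erase, hmemS₀]
    -- Step 1
    have e1 : ∑ s ∈ S₀, ψ (a * s + b / s) * η s
        = ψ (2 * v) * ∑ s ∈ S₀, η s * ψ (w s) := by
      rw [Finset.mul_sum]
      refine Finset.sum_congr rfl fun s hs => ?_
      have hs0 : s ≠ 0 := (hmemS₀ s).mp hs
      have harg : a * s + b / s = 2 * v + w s := by
        rw [hwdef]
        show a * s + b / s = 2 * v + (a * s - v) ^ 2 / (a * s)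
        field_simp
        linear_combination (-1) * hv
      rw [harg, AddChar.map_add_eq_mul]
      ring
    -- Step 2 : split off s = v / a
    have hva : v / a ∈ S₀ := (hmemS₀ _).mpr (div_ne_zero hv0 ha)
    have hwva : w (v / a) = 0 := by
      rw [hwdef]
      show (a * (v / a) - v) ^ 2 / (a * (v / a)) = 0
      rw [mul_div_cancel₀ _ ha, sub_self]
      norm_num
    have e2 : ∑ s ∈ S₀, η s * ψ (w s)
        = η (v / a) + ∑ s ∈ A, η s * ψ (w s) := by
      rw [hAdef, ← Finset.sum_erase_add _ _ hva, hwva, AddChar.map_zero_eq_one,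
        mul_one]
      ring
    -- Step 3 : η s = η a * η (w s) on A
    have e3 : ∑ s ∈ A, η s * ψ (w s)
        = η a * ∑ s ∈ A, η (w s) * ψ (w s) := by
      rw [Finset.mul_sum]
      refine Finset.sum_congr rfl fun s hs => ?_
      obtain ⟨hsv, hs0⟩ := (hmemA s).mp hs
      have hne : a * s - v ≠ 0 := by
        intro h
        apply hsv
        have h' : a * s = v := by linear_combination h
        exact (eq_div_iff ha).mpr (by linear_combination h')
      have hws0 : w s ≠ 0 := by
        rw [hwdef]
        exact div_ne_zero (pow_ne_zero 2 hne) (mul_ne_zero ha hs0)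
      have hid : a * (w s * s) = (a * s - v) * (a * s - v) := by
        rw [hwdef]
        show a * ((a * s - v) ^ 2 / (a * s) * s) = _
        field_simp
      have h1 : η a * (η (w s) * η s) = 1 := by
        rw [← map_mul, ← map_mul, hid, map_mul, hηsq _ hne]
      have hkey : η s = η a * η (w s) := by
        have ha2 := hηsq a ha
        have hw2 := hηsq _ hws0
        linear_combination (η a * η (w s)) * h1
          - (η s * η (w s) * η (w s)) * ha2 - (η s) * hw2
      rw [hkey]; ring
    -- Step 4 : group the sum by the value of w
    have e4 : ∑ s ∈ A, η (w s) * ψ (w s)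
        = ∑ u : F, ((A.filter (fun s => w s = u)).card : ℂ) * (η u * ψ u) := by
      rw [← Finset.sum_fiberwise_of_maps_to (g := w)
        (fun s _ => Finset.mem_univ (w s)) (fun s => η (w s) * ψ (w s))]
      refine Finset.sum_congr rfl fun u _ => ?_
      calc ∑ s ∈ A.filter (fun s => w s = u), η (w s) * ψ (w s)
          = ∑ _s ∈ A.filter (fun s => w s = u), η u * ψ u :=
            Finset.sum_congr rfl fun s hs => by
              rw [(Finset.mem_filter.mp hs).2]
        _ = _ := by rw [Finset.sum_const, nsmul_eq_mul]
    -- Step 5 : count the fibers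
    have e5 : ∀ u : F, ((A.filter (fun s => w s = u)).card : ℂ) * (η u * ψ u)
        = (1 + η (u * (u + 4 * v))) * (η u * ψ u) := by
      intro u
      by_cases hu : u = 0
      · subst hu
        rw [hη0]
        ring
      · have h2a : (2 : F) * a ≠ 0 := mul_ne_zero h2 ha
        have hbij : (A.filter (fun s => w s = u)).card
            = (Finset.univ.filter (fun x : F => x ^ 2 = u * (u + 4 * v))).card := by
          apply Finset.card_nbij' (i := fun s => 2 * a * s - (2 * v + u))
            (j := fun x => (x + (2 * v + u)) / (2 * a))
          · intro s hs
            simp only [Finset.mem_coe, Finset.mem_filter, Finset.mem_univ, true_and] at hs ⊢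
            obtain ⟨hsA, hwsu⟩ := hs
            obtain ⟨hsv, hs0⟩ := (hmemA s).mp hsA
            have key : (a * s - v) ^ 2 = u * (a * s) := by
              rw [← hwsu, show w s = (a * s - v) ^ 2 / (a * s) from rfl,
                div_mul_cancel₀ _ (mul_ne_zero ha hs0)]
            linear_combination 4 * key
          · intro x hx
            simp only [Finset.mem_coe, Finset.mem_filter, Finset.mem_univ, true_and] at hx ⊢
            set s : F := (x + (2 * v + u)) / (2 * a) with hsdef
            have key' : (a * s - v) ^ 2 = u * (a * s) := by
              rw [hsdef]
              field_simp
              linear_combination hx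
            have hs0 : s ≠ 0 := by
              intro h
              rw [h] at key'
              have hv2 : v ^ 2 = 0 := by linear_combination key'
              exact hv0 (pow_eq_zero_iff (two_ne_zero) |>.mp hv2)
            have hsv : s ≠ v / a := by
              intro h
              have hasv : a * s = v := by rw [h, mul_div_cancel₀ _ ha]
              rw [hasv, sub_self] at key'
              have : u * v = 0 := by linear_combination -key'
              rcases mul_eq_zero.mp this with h' | h'
              · exact hu h'
              · exact hv0 h'
            refine ⟨(hmemA s).mpr ⟨hsv, hs0⟩, ?_⟩
            rw [hwdef]
            show (a * s - v) ^ 2 / (a * s) = u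
            rw [div_eq_iff (mul_ne_zero ha hs0)]
            linear_combination key'
          · intro s _
            field_simp
            ring
          · intro x _
            field_simp
            ring
        have hsqrts := quadraticChar_card_sqrts hF2 (u * (u + 4 * v))
        have hset : ({x : F | x ^ 2 = u * (u + 4 * v)}.toFinset)
            = Finset.univ.filter (fun x : F => x ^ 2 = u * (u + 4 * v)) := by
          ext x
          simp [Set.mem_toFinset]
        rw [hset] at hsqrts
        have hcardC : ((A.filter (fun s => w s = u)).card : ℂ)
            = 1 + η (u * (u + 4 * v)) := by
          rw [hbij]
          have := congrArg (fun z : ℤ => (z : ℂ)) hsqrts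
          push_cast at this
          rw [this, hηdef, etaF_apply]
          ring
        rw [hcardC]
    -- Step 6/7 : evaluate the resulting sums
    have e6 : ∑ u : F, (1 + η (u * (u + 4 * v))) * (η u * ψ u)
        = g + ∑ u : F, η (u * (u + 4 * v)) * (η u * ψ u) := by
      rw [Finset.sum_congr rfl (fun u _ => show (1 + η (u * (u + 4 * v))) * (η u * ψ u)
          = η u * ψ u + η (u * (u + 4 * v)) * (η u * ψ u) from by ring),
        Finset.sum_add_distrib]
      rfl
    -- Step 7
    have e7a : ∑ u : F, η (u * (u + 4 * v)) * (η u * ψ u)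
        = ∑ u ∈ S₀, η (u + 4 * v) * ψ u := by
      rw [← hfilter (fun u => η (u * (u + 4 * v)) * (η u * ψ u)) (by simp [hη0])]
      refine Finset.sum_congr rfl fun u hu => ?_
      have hu0 : u ≠ 0 := (hmemS₀ u).mp hu
      rw [map_mul]
      have hu2 := hηsq u hu0
      linear_combination (η (u + 4 * v) * ψ u) * hu2
    have e7b : ∑ u ∈ S₀, η (u + 4 * v) * ψ u
        = ∑ t ∈ Finset.univ.erase (4 * v), η t * ψ (t - 4 * v) := by
      refine Finset.sum_nbij' (i := fun u => u + 4 * v) (j := fun t => t - 4 * v)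
        ?_ ?_ ?_ ?_ ?_
      · intro u hu
        have hu0 : u ≠ 0 := (hmemS₀ u).mp hu
        exact Finset.mem_erase.mpr ⟨fun h => hu0 (by linear_combination h),
          Finset.mem_univ _⟩
      · intro t ht
        have h1 := (Finset.mem_erase.mp ht).1
        exact (hmemS₀ _).mpr (fun h => h1 (by linear_combination h))
      · intro u _; ring
      · intro t _; ring
      · intro u _
        show η (u + 4 * v) * ψ u = η (u + 4 * v) * ψ (u + 4 * v - 4 * v)
        rw [add_sub_cancel_right]
    have e7c : ∑ t ∈ Finset.univ.erase (4 * v), η t * ψ (t - 4 * v)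
        = ψ (-(4 * v)) * (g - η (4 * v) * ψ (4 * v)) := by
      have hpt : ∀ t : F, η t * ψ (t - 4 * v) = (η t * ψ t) * ψ (-(4 * v)) := by
        intro t
        rw [sub_eq_add_neg, AddChar.map_add_eq_mul]
        ring
      rw [Finset.sum_congr rfl (fun t _ => hpt t), ← Finset.sum_mul]
      have hadd := Finset.sum_erase_add Finset.univ (fun t : F => η t * ψ t)
        (Finset.mem_univ (4 * v))
      have hgg : g = ∑ t : F, η t * ψ t := rfl
      have hsplit : ∑ t ∈ Finset.univ.erase (4 * v), η t * ψ t
          = g - η (4 * v) * ψ (4 * v) := by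
        linear_combination hadd - hgg
      rw [hsplit]; ring
    -- assemble
    have e8 : ∑ s ∈ S₀, ψ (a * s + b / s) * η s
        = ψ (2 * v) * (η a * g * (1 + ψ (-(4 * v)))) := by
      rw [e1, e2, e3, e4, Finset.sum_congr rfl (fun u _ => e5 u), e6, e7a, e7b, e7c]
      have hXY : ψ (-(4 * v)) * ψ (4 * v) = 1 := by
        rw [← AddChar.map_add_eq_mul, neg_add_cancel, AddChar.map_zero_eq_one]
      have h4v : η (4 * v) = η v := by
        rw [show (4 : F) * v = 2 * (2 * v) from by ring, map_mul, map_mul, ← mul_assoc,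
          hηsq 2 h2, one_mul]
      have hva' : η (v / a) = η v * η a := hdiv v a ha
      rw [hva', h4v]
      linear_combination (-(ψ (2 * v) * η a * η v)) * hXY
    rw [e8, norm_mul, norm_mul, norm_mul,
      hψabs, hηabs a ha, hgabs, one_mul, one_mul]
    have hb1 : ‖1 + ψ (-(4 * v))‖ ≤ 2 := by
      calc ‖1 + ψ (-(4 * v))‖
          ≤ ‖(1 : ℂ)‖ + ‖ψ (-(4 * v))‖ := norm_add_le _ _
        _ = 2 := by rw [norm_one, hψabs]; norm_num
    nlinarith [norm_nonneg (1 + ψ (-(4 * v)))]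
  · -- a*b is not a square : the sum vanishes
    have hηab : η (a * b) = -1 := by
      rw [hηdef, etaF_apply, quadraticChar_neg_one_iff_not_isSquare.mpr hsq]
      norm_num
    have hT : (∑ s ∈ S₀, ψ (a * s + b / s) * η s)
        = η (a * b) * ∑ s ∈ S₀, ψ (a * s + b / s) * η s := by
      nth_rewrite 1 [Finset.sum_nbij' (i := fun s => b / (a * s))
        (j := fun s => b / (a * s)) (t := S₀)
        (g := fun t => η (a * b) * (ψ (a * t + b / t) * η t))
        (fun s hs => (hmemS₀ _).mpr
          (div_ne_zero hb (mul_ne_zero ha ((hmemS₀ s).mp hs))))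
        (fun s hs => (hmemS₀ _).mpr
          (div_ne_zero hb (mul_ne_zero ha ((hmemS₀ s).mp hs))))
        (fun s hs => by
          have hs0 : s ≠ 0 := (hmemS₀ s).mp hs
          field_simp)
        (fun s hs => by
          have hs0 : s ≠ 0 := (hmemS₀ s).mp hs
          field_simp)
        (fun s hs => by
          have hs0 : s ≠ 0 := (hmemS₀ s).mp hs
          show ψ (a * s + b / s) * η s
            = η (a * b) * (ψ (a * (b / (a * s)) + b / (b / (a * s))) * η (b / (a * s)))
          have harg : a * (b / (a * s)) + b / (b / (a * s)) = a * s + b / s := by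
            rw [div_div_eq_mul_div]
            field_simp
            ring
          have hηd : η (b / (a * s)) = η b * (η a * η s) := by
            rw [hdiv b _ (mul_ne_zero ha hs0), map_mul]
          rw [harg, hηd, map_mul]
          have ha2 := hηsq a ha
          have hb2 := hηsq b hb
          linear_combination (-(ψ (a * s + b / s) * η s * (η b * η b))) * ha2
            + (-(ψ (a * s + b / s) * η s)) * hb2)]
      rw [← Finset.mul_sum]
    have hT0 : (∑ s ∈ S₀, ψ (a * s + b / s) * η s) = 0 := by
      rw [hηab] at hT
      have h2T : (2 : ℂ) * ∑ s ∈ S₀, ψ (a * s + b / s) * η s = 0 := by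
        linear_combination hT
      rcases mul_eq_zero.mp h2T with h | h
      · norm_num at h
      · exact h
    rw [hT0, norm_zero]
    positivity
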